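/- arXiv:1012.5489 — 3 statements merged into one kernel-verified Lean document; each statement's English description precedes it below -/
import Mathlib

section
/- Let n ≥ 1 be an integer and let p ≥ 2 be a real number. Then for all vectors a, b ∈ ℝ^n, one has 2^{2-p} |b - a|^p ≤ ⟨ |b|^{p-2} b - |a|^{p-2} a , b - a ⟩, where ⟨·,·⟩ is the Euclidean inner product and |·| the Euclidean norm (with the convention that |v|^{p-2} v = 0 when v = 0). -/
/-- Jensen for `x ↦ x^q`, `q ≥ 1`, two points, real version. -/
lemma jensen_rpow {x y q : ℝ} (hx : 0 ≤ x) (hy : 0 ≤ y) (hq : 1 ≤ q) :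
    (x + y) ^ q ≤ 2 ^ (q - 1) * (x ^ q + y ^ q) := by
  have h := NNReal.rpow_add_le_mul_rpow_add_rpow x.toNNReal y.toNNReal hq
  have := (NNReal.coe_le_coe).2 h
  push_cast at this
  rwa [Real.coe_toNNReal _ hx, Real.coe_toNNReal _ hy] at this

/-- helper: `(x/r)^(p-2) * x = x^(p-1) / r^(p-2)` for `x ≥ 0`, `r > 0`. -/
lemma pow_div_helper {x r p : ℝ} (hx : 0 ≤ x) (hr : 0 < r) (hp : 2 ≤ p) :
    (x / r) ^ (p - 2) * x = x ^ (p - 1) / r ^ (p - 2) := by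
  rw [Real.div_rpow hx hr.le]
  rcases eq_or_lt_of_le hx with h | h
  · rw [← h, Real.zero_rpow (by linarith : p - 1 ≠ 0), mul_zero, zero_div]
  · rw [div_mul_eq_mul_div]
    congr 1
    rw [← Real.rpow_add_one (ne_of_gt h) (p - 2)]
    congr 1
    ring

/-- Scalar core of the p-Laplacian monotonicity inequality. -/
lemma key_scalar (p s t r X Y : ℝ) (hp : 2 ≤ p) (hs : 0 ≤ s) (ht : 0 ≤ t) (hr : 0 ≤ r)
    (hX : X ≤ t * r) (hY : Y ≤ s * r) (hsum : X + Y = r * r)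
    (hdiff : X - Y = t * t - s * s) :
    (2 : ℝ) ^ (2 - p) * r ^ p ≤ t ^ (p - 2) * X + s ^ (p - 2) * Y := by
  rcases eq_or_lt_of_le hr with hr0 | hr0
  · -- r = 0
    have hX0 : X = 0 := by nlinarith
    have hY0 : Y = 0 := by nlinarith
    rw [hX0, hY0, ← hr0, Real.zero_rpow (by linarith : p ≠ 0)]
    simp
  have h2p : (2:ℝ) ^ (2 - p) ≤ 1 :=
    Real.rpow_le_one_of_one_le_of_nonpos one_le_two (by linarith)
  have hrr : r * r = r ^ (2:ℝ) := by
    rw [show (2:ℝ) = (1:ℝ) + 1 by norm_num, Real.rpow_add hr0, Real.rpow_one]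
  have hrpow : r ^ (p - 2) * (r * r) = r ^ p := by
    rw [hrr, ← Real.rpow_add hr0]
    congr 1
    ring
  rcases lt_or_ge X 0 with hX0 | hX0
  · -- X < 0, hence Y = r^2 - X > r^2, s > r, and t ≤ s
    have hYr : r * r < Y := by nlinarith
    have hts : t ≤ s := by nlinarith
    have hsr : r < s := by nlinarith
    have h1 : t ^ (p - 2) * X + s ^ (p - 2) * Y ≥ s ^ (p - 2) * (X + Y) := by
      have := Real.rpow_le_rpow ht hts (by linarith : (0:ℝ) ≤ p - 2)
      nlinarith
    have h2 : r ^ (p - 2) ≤ s ^ (p - 2) :=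
      Real.rpow_le_rpow hr hsr.le (by linarith)
    calc (2:ℝ) ^ (2 - p) * r ^ p ≤ 1 * r ^ p := by
            apply mul_le_mul_of_nonneg_right h2p (Real.rpow_nonneg hr _)
      _ = r ^ (p - 2) * (r * r) := by rw [one_mul, hrpow]
      _ ≤ s ^ (p - 2) * (r * r) := by
            apply mul_le_mul_of_nonneg_right h2 (by positivity)
      _ ≤ s ^ (p - 2) * (X + Y) := by rw [hsum]
      _ ≤ t ^ (p - 2) * X + s ^ (p - 2) * Y := by linarith
  rcases lt_or_ge Y 0 with hY0 | hY0
  · -- Y < 0, symmetric: X > r^2, t > r, s ≤ t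
    have hXr : r * r < X := by nlinarith
    have hst : s ≤ t := by nlinarith
    have htr : r < t := by nlinarith
    have h1 : t ^ (p - 2) * X + s ^ (p - 2) * Y ≥ t ^ (p - 2) * (X + Y) := by
      have := Real.rpow_le_rpow hs hst (by linarith : (0:ℝ) ≤ p - 2)
      nlinarith
    have h2 : r ^ (p - 2) ≤ t ^ (p - 2) :=
      Real.rpow_le_rpow hr htr.le (by linarith)
    calc (2:ℝ) ^ (2 - p) * r ^ p ≤ 1 * r ^ p := by
            apply mul_le_mul_of_nonneg_right h2p (Real.rpow_nonneg hr _)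
      _ = r ^ (p - 2) * (r * r) := by rw [one_mul, hrpow]
      _ ≤ t ^ (p - 2) * (r * r) := by
            apply mul_le_mul_of_nonneg_right h2 (by positivity)
      _ ≤ t ^ (p - 2) * (X + Y) := by rw [hsum]
      _ ≤ t ^ (p - 2) * X + s ^ (p - 2) * Y := by linarith
  -- main case: X ≥ 0, Y ≥ 0
  have htX : X / r ≤ t := (div_le_iff₀ hr0).2 hX
  have hsY : Y / r ≤ s := (div_le_iff₀ hr0).2 hY
  have h1 : (X / r) ^ (p - 2) * X ≤ t ^ (p - 2) * X := by
    apply mul_le_mul_of_nonneg_right _ hX0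
    exact Real.rpow_le_rpow (div_nonneg hX0 hr) htX (by linarith)
  have h2 : (Y / r) ^ (p - 2) * Y ≤ s ^ (p - 2) * Y := by
    apply mul_le_mul_of_nonneg_right _ hY0
    exact Real.rpow_le_rpow (div_nonneg hY0 hr) hsY (by linarith)
  rw [pow_div_helper hX0 hr0 hp] at h1
  rw [pow_div_helper hY0 hr0 hp] at h2
  -- Jensen: (X+Y)^(p-1) ≤ 2^(p-2) * (X^(p-1) + Y^(p-1))
  have hj := jensen_rpow hX0 hY0 (by linarith : (1:ℝ) ≤ p - 1)
  have hrp : (X + Y) ^ (p - 1) = r ^ (2 * (p - 1)) := by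
    rw [hsum, hrr, ← Real.rpow_mul hr]
  have h2pos : (0:ℝ) < 2 ^ (p - 1 - 1) := Real.rpow_pos_of_pos two_pos _
  -- combine
  have hkey : 2 ^ (2 - p) * r ^ (2 * (p - 1)) ≤ X ^ (p - 1) + Y ^ (p - 1) := by
    rw [← hrp]
    have : 2 ^ (2 - p) * (X + Y) ^ (p - 1) ≤
        2 ^ (2 - p) * (2 ^ (p - 1 - 1) * (X ^ (p-1) + Y ^ (p-1))) := by
      apply mul_le_mul_of_nonneg_left hj (Real.rpow_nonneg (by norm_num) _)
    refine this.trans_eq ?_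
    rw [← mul_assoc, ← Real.rpow_add two_pos,
      show 2 - p + (p - 1 - 1) = (0:ℝ) by ring, Real.rpow_zero, one_mul]
  have hdivpos : (0:ℝ) < r ^ (p - 2) := Real.rpow_pos_of_pos hr0 _
  have hfin : 2 ^ (2 - p) * r ^ p ≤ (X ^ (p - 1) + Y ^ (p - 1)) / r ^ (p - 2) := by
    rw [le_div_iff₀ hdivpos]
    calc 2 ^ (2 - p) * r ^ p * r ^ (p - 2)
        = 2 ^ (2 - p) * r ^ (2 * (p - 1)) := by
          rw [mul_assoc, ← Real.rpow_add hr0, show p + (p - 2) = 2 * (p - 1) by ring]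
      _ ≤ X ^ (p - 1) + Y ^ (p - 1) := hkey
  calc (2:ℝ) ^ (2 - p) * r ^ p ≤ (X ^ (p - 1) + Y ^ (p - 1)) / r ^ (p - 2) := hfin
    _ = X ^ (p - 1) / r ^ (p - 2) + Y ^ (p - 1) / r ^ (p - 2) := by ring
    _ ≤ t ^ (p - 2) * X + s ^ (p - 2) * Y := by linarith

/-- The elementary monotonicity inequality for the `p`-Laplacian:
`2^{2-p} |b-a|^p ≤ ⟨|b|^{p-2} b - |a|^{p-2} a, b - a⟩` for `p ≥ 2` and `a, b ∈ ℝ^n`. -/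
theorem pLaplacian_monotonicity (n : ℕ) (hn : 1 ≤ n) (p : ℝ) (hp : 2 ≤ p)
    (a b : EuclideanSpace ℝ (Fin n)) :
    (2 : ℝ) ^ (2 - p) * ‖b - a‖ ^ p ≤
      (inner ℝ (‖b‖ ^ (p - 2) • b - ‖a‖ ^ (p - 2) • a) (b - a) : ℝ) := by
  set X : ℝ := inner ℝ b (b - a) with hXdef
  set Y : ℝ := inner ℝ a (a - b) with hYdef
  have expand : (inner ℝ ((‖b‖:ℝ) ^ (p - 2) • b - ‖a‖ ^ (p - 2) • a) (b - a) : ℝ)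
      = ‖b‖ ^ (p - 2) * X + ‖a‖ ^ (p - 2) * Y := by
    rw [inner_sub_left, real_inner_smul_left, real_inner_smul_left, hXdef, hYdef]
    rw [inner_sub_right, inner_sub_right, inner_sub_right]
    ring
  rw [expand]
  apply key_scalar p ‖a‖ ‖b‖ ‖b - a‖ X Y hp (norm_nonneg a) (norm_nonneg b) (norm_nonneg _)
  · exact real_inner_le_norm b (b - a)
  · calc (inner ℝ a (a - b) : ℝ) ≤ ‖a‖ * ‖a - b‖ := real_inner_le_norm a (a - b)
      _ = ‖a‖ * ‖b - a‖ := by rw [norm_sub_rev]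
  · have hba : (inner ℝ (b - a) (b - a) : ℝ) = ‖b - a‖ * ‖b - a‖ :=
      real_inner_self_eq_norm_mul_norm _
    simp only [hXdef, hYdef, inner_sub_left, inner_sub_right] at hba ⊢
    have hc : (inner ℝ a b : ℝ) = inner ℝ b a := real_inner_comm b a
    linarith
  · have hb : (inner ℝ b b : ℝ) = ‖b‖ * ‖b‖ := real_inner_self_eq_norm_mul_norm b
    have ha : (inner ℝ a a : ℝ) = ‖a‖ * ‖a‖ := real_inner_self_eq_norm_mul_norm a
    have hc : (inner ℝ a b : ℝ) = inner ℝ b a := real_inner_comm b a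
    simp only [hXdef, hYdef, inner_sub_right]
    linarith
end

section
/- Let N ≥ 2 be an integer. Then the limit M := lim_{n→∞} n ∫_0^1 exp( n ( t^{N/(N-1)} - t ) ) dt exists (as n → ∞ through the positive integers) and satisfies M ≥ 2. -/
open Filter Topology intervalIntegral

private lemma moser_int_exp (a b c : ℝ) (hc : c ≠ 0) :
    ∫ t in a..b, Real.exp (c * t) = (Real.exp (c * b) - Real.exp (c * a)) / c := by
  rw [intervalIntegral.integral_comp_mul_left (fun x => Real.exp x) hc, integral_exp,
    smul_eq_mul]; ring

private lemma moser_cont (c p : ℝ) (hp : 0 ≤ p) :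
    Continuous fun t : ℝ => Real.exp (c * (t ^ p - t)) :=
  Real.continuous_exp.comp (continuous_const.mul
    ((Real.continuous_rpow_const hp).sub continuous_id))

-- tangent line at 1 from below: t^(1+q) ≥ (1+q) t - q
private lemma moser_tangent {q t : ℝ} (hq : 0 < q) (ht : 0 ≤ t) :
    (1 + q) * t - q ≤ t ^ (1 + q) := by
  have h := one_add_mul_self_le_rpow_one_add (s := t - 1) (by linarith) (p := 1 + q)
    (by linarith)
  have e : (1 : ℝ) + (t - 1) = t := by ring
  rw [e] at h
  nlinarith [h]

-- t^(1+q) ≤ t - q t (1-t) on [0,1], for 0 < q ≤ 1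
private lemma moser_upper {q t : ℝ} (hq : 0 < q) (hq1 : q ≤ 1) (ht : 0 ≤ t) (ht1 : t ≤ 1) :
    t ^ (1 + q) ≤ t - q * t * (1 - t) := by
  have hsplit : t ^ (1 + q) = t * t ^ q := by
    rw [Real.rpow_add' ht (by positivity), Real.rpow_one]
  have h := rpow_one_add_le_one_add_mul_self (s := t - 1) (by linarith) (p := q) hq.le hq1
  have e : (1 : ℝ) + (t - 1) = t := by ring
  rw [e] at h
  rw [hsplit]
  nlinarith [h]

-- t^(1+q) ≤ δ^q * t for 0 ≤ t ≤ δ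
private lemma moser_small {q t δ : ℝ} (hq : 0 < q) (ht : 0 ≤ t) (htδ : t ≤ δ) :
    t ^ (1 + q) ≤ δ ^ q * t := by
  have hsplit : t ^ (1 + q) = t * t ^ q := by
    rw [Real.rpow_add' ht (by positivity), Real.rpow_one]
  rw [hsplit, mul_comm]
  exact mul_le_mul_of_nonneg_right (Real.rpow_le_rpow ht htδ hq.le) ht

private lemma moser_lower {q c : ℝ} (hq : 0 < q) (hc : 1 ≤ c) :
    (1 - Real.exp (-c/2)) + (1 - Real.exp (-(c*q)/2))/q
      ≤ c * ∫ t in (0:ℝ)..1, Real.exp (c * (t ^ (1 + q) - t)) := by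
  have hc0 : 0 < c := by linarith
  have hcont := moser_cont c (1+q) (by positivity)
  have hint : ∀ a b : ℝ, IntervalIntegrable (fun t => Real.exp (c * (t ^ (1+q) - t)))
      MeasureTheory.volume a b := fun a b => hcont.intervalIntegrable a b
  have hsplit : (∫ t in (0:ℝ)..(1/2), Real.exp (c * (t ^ (1+q) - t)))
      + (∫ t in (1/2:ℝ)..1, Real.exp (c * (t ^ (1+q) - t)))
      = ∫ t in (0:ℝ)..1, Real.exp (c * (t ^ (1+q) - t)) :=
    integral_add_adjacent_intervals (hint 0 (1/2)) (hint (1/2) 1)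
  -- first piece
  have h1 : (∫ t in (0:ℝ)..(1/2), Real.exp ((-c) * t))
      ≤ ∫ t in (0:ℝ)..(1/2), Real.exp (c * (t ^ (1+q) - t)) := by
    apply integral_mono_on (by norm_num)
      ((Real.continuous_exp.comp (continuous_const.mul continuous_id)).intervalIntegrable _ _)
      (hint _ _)
    intro t ht
    show Real.exp ((-c) * t) ≤ Real.exp (c * (t ^ (1+q) - t))
    apply Real.exp_le_exp.2
    have h0 : (0:ℝ) ≤ t ^ (1+q) := Real.rpow_nonneg ht.1 _
    nlinarith [mul_nonneg hc0.le h0]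
  -- second piece
  have h2 : (∫ t in (1/2:ℝ)..1, Real.exp (-(c*q)) * Real.exp ((c*q) * t))
      ≤ ∫ t in (1/2:ℝ)..1, Real.exp (c * (t ^ (1+q) - t)) := by
    apply integral_mono_on (by norm_num)
      ((continuous_const.mul (Real.continuous_exp.comp
        (continuous_const.mul continuous_id))).intervalIntegrable _ _)
      (hint _ _)
    intro t ht
    show Real.exp (-(c*q)) * Real.exp ((c*q) * t) ≤ Real.exp (c * (t ^ (1+q) - t))
    rw [← Real.exp_add]
    apply Real.exp_le_exp.2
    have htan := moser_tangent hq (le_trans (by norm_num) ht.1)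
    nlinarith [mul_le_mul_of_nonneg_left htan hc0.le]
  have e1 : c * ∫ t in (0:ℝ)..(1/2), Real.exp ((-c) * t) = 1 - Real.exp (-c/2) := by
    rw [moser_int_exp _ _ _ (by linarith : (-c) ≠ 0)]
    rw [show (-c) * (1/2) = -c/2 by ring, show (-c) * 0 = 0 by ring, Real.exp_zero]
    field_simp [hc0.ne']
    ring
  have e2 : c * ∫ t in (1/2:ℝ)..1, Real.exp (-(c*q)) * Real.exp ((c*q) * t)
      = (1 - Real.exp (-(c*q)/2))/q := by
    rw [intervalIntegral.integral_const_mul, moser_int_exp _ _ _ (by positivity : c*q ≠ 0)]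
    rw [mul_one]
    rw [show Real.exp (-(c*q)) * ((Real.exp (c*q) - Real.exp (c*q*(1/2)))/(c*q))
        = (Real.exp (-(c*q)) * Real.exp (c*q) - Real.exp (-(c*q)) * Real.exp (c*q*(1/2)))/(c*q)
        by ring, ← Real.exp_add, ← Real.exp_add]
    rw [show -(c*q) + c*q = 0 by ring, Real.exp_zero, show -(c*q) + c*q*(1/2) = -(c*q)/2 by ring]
    field_simp [hc0.ne', hq.ne']
  calc (1 - Real.exp (-c/2)) + (1 - Real.exp (-(c*q)/2))/q
      = c * (∫ t in (0:ℝ)..(1/2), Real.exp ((-c) * t))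
        + c * (∫ t in (1/2:ℝ)..1, Real.exp (-(c*q)) * Real.exp ((c*q) * t)) := by
        rw [e1, e2]
    _ ≤ c * (∫ t in (0:ℝ)..(1/2), Real.exp (c * (t ^ (1+q) - t)))
        + c * (∫ t in (1/2:ℝ)..1, Real.exp (c * (t ^ (1+q) - t))) := by
        gcongr
    _ = c * ∫ t in (0:ℝ)..1, Real.exp (c * (t ^ (1+q) - t)) := by rw [← hsplit]; ring

private lemma moser_upper_bound {q δ c : ℝ} (hq : 0 < q) (hq1 : q ≤ 1) (hδ : 0 < δ)
    (hδ1 : δ < 1) (hc : 1 ≤ c) :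
    c * ∫ t in (0:ℝ)..1, Real.exp (c * (t ^ (1 + q) - t))
      ≤ 1/(1 - δ^q) + c * Real.exp (-(c * (q*δ*(1-δ)))) + 1/(q*(1-δ)) := by
  have hc0 : 0 < c := by linarith
  have ha : 0 < 1 - δ^q := by
    have := Real.rpow_lt_one hδ.le hδ1 hq
    linarith
  set a : ℝ := 1 - δ^q with hadef
  set b : ℝ := q*(1-δ) with hbdef
  set m : ℝ := q*δ*(1-δ) with hmdef
  have hb : 0 < b := mul_pos hq (by linarith)
  have hm : 0 < m := mul_pos (mul_pos hq hδ) (by linarith)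
  have hint : ∀ x y : ℝ, IntervalIntegrable (fun t => Real.exp (c * (t ^ (1+q) - t)))
      MeasureTheory.volume x y := fun x y =>
    (moser_cont c (1+q) (by positivity)).intervalIntegrable x y
  have hg1 : Continuous fun t : ℝ => Real.exp ((-(c*a)) * t) :=
    Real.continuous_exp.comp (continuous_const.mul continuous_id)
  have hg3 : Continuous fun t : ℝ => Real.exp (-(c*b)) * Real.exp ((c*b) * t) :=
    continuous_const.mul (Real.continuous_exp.comp (continuous_const.mul continuous_id))
  -- pointwise bound
  have hmono : (∫ t in (0:ℝ)..1, Real.exp (c * (t ^ (1+q) - t)))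
      ≤ ∫ t in (0:ℝ)..1, (Real.exp ((-(c*a)) * t)
          + (Real.exp (-(c*m)) + Real.exp (-(c*b)) * Real.exp ((c*b) * t))) := by
    apply integral_mono_on (by norm_num) (hint 0 1)
      (((hg1.add (continuous_const.add hg3))).intervalIntegrable _ _)
    intro t ht
    obtain ⟨ht0, ht1⟩ := ht
    show Real.exp (c * (t ^ (1+q) - t)) ≤ Real.exp ((-(c*a)) * t)
          + (Real.exp (-(c*m)) + Real.exp (-(c*b)) * Real.exp ((c*b) * t))
    have e2pos : (0:ℝ) < Real.exp (-(c*m)) := Real.exp_pos _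
    have e3pos : (0:ℝ) < Real.exp (-(c*b)) * Real.exp ((c*b) * t) := by positivity
    have e1pos : (0:ℝ) < Real.exp ((-(c*a)) * t) := Real.exp_pos _
    rcases le_or_gt t δ with hcase | hcase
    · have key : Real.exp (c * (t ^ (1+q) - t)) ≤ Real.exp ((-(c*a)) * t) := by
        apply Real.exp_le_exp.2
        rw [hadef]
        have hsm := moser_small hq ht0 hcase
        nlinarith [mul_le_mul_of_nonneg_left hsm hc0.le]
      linarith
    · have hup := moser_upper hq hq1 ht0 ht1
      rcases le_or_gt t (1-δ) with hcase2 | hcase2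
      · have key : Real.exp (c * (t ^ (1+q) - t)) ≤ Real.exp (-(c*m)) := by
          apply Real.exp_le_exp.2
          rw [hmdef]
          have htt : δ*(1-δ) ≤ t*(1-t) := by
            nlinarith [mul_nonneg (by linarith : (0:ℝ) ≤ t-δ) (by linarith : (0:ℝ) ≤ 1-t-δ)]
          have h3 : t ^ (1+q) - t ≤ -(q*δ*(1-δ)) := by
            nlinarith [mul_le_mul_of_nonneg_left htt hq.le]
          nlinarith [mul_le_mul_of_nonneg_left h3 hc0.le]
        linarith
      · have key : Real.exp (c * (t ^ (1+q) - t))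
            ≤ Real.exp (-(c*b)) * Real.exp ((c*b) * t) := by
          rw [← Real.exp_add]
          apply Real.exp_le_exp.2
          rw [hbdef]
          have h3 : t ^ (1+q) - t ≤ -(q*(1-δ)*(1-t)) := by
            nlinarith [mul_nonneg hq.le
              (mul_nonneg (by linarith : (0:ℝ) ≤ t-(1-δ)) (by linarith : (0:ℝ) ≤ 1-t))]
          nlinarith [mul_le_mul_of_nonneg_left h3 hc0.le]
        linarith
  -- compute the RHS integral
  have hIadd : (∫ t in (0:ℝ)..1, (Real.exp ((-(c*a)) * t)
        + (Real.exp (-(c*m)) + Real.exp (-(c*b)) * Real.exp ((c*b) * t))))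
      = (∫ t in (0:ℝ)..1, Real.exp ((-(c*a)) * t))
        + ((∫ t in (0:ℝ)..1, (Real.exp (-(c*m)) : ℝ))
          + ∫ t in (0:ℝ)..1, Real.exp (-(c*b)) * Real.exp ((c*b) * t)) := by
    rw [integral_add (g := fun t => Real.exp (-(c*m)) + Real.exp (-(c*b)) * Real.exp ((c*b) * t))
      (hg1.intervalIntegrable _ _)
      ((continuous_const.add hg3).intervalIntegrable _ _),
      integral_add (continuous_const.intervalIntegrable _ _) (hg3.intervalIntegrable _ _)]
  have hEa : c * (∫ t in (0:ℝ)..1, Real.exp ((-(c*a)) * t)) ≤ 1/a := by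
    rw [moser_int_exp _ _ _ (neg_ne_zero.mpr (mul_pos hc0 ha).ne')]
    rw [show (-(c*a))*1 = -(c*a) by ring, show (-(c*a))*0 = 0 by ring, Real.exp_zero]
    rw [show c * ((Real.exp (-(c*a)) - 1)/(-(c*a))) = (1 - Real.exp (-(c*a)))/a by
      field_simp [hc0.ne', ha.ne']; ring]
    rw [div_le_div_iff₀ ha ha]
    nlinarith [Real.exp_pos (-(c*a))]
  have hEm : c * (∫ t in (0:ℝ)..1, (Real.exp (-(c*m)) : ℝ)) = c * Real.exp (-(c*m)) := by
    rw [intervalIntegral.integral_const]; simp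
  have hEb : c * (∫ t in (0:ℝ)..1, Real.exp (-(c*b)) * Real.exp ((c*b) * t)) ≤ 1/b := by
    rw [intervalIntegral.integral_const_mul, moser_int_exp _ _ _ (mul_pos hc0 hb).ne']
    rw [mul_one, show c * (Real.exp (-(c*b)) * ((Real.exp (c*b) - Real.exp (c*b*0))/(c*b)))
        = (Real.exp (-(c*b)) * Real.exp (c*b) - Real.exp (-(c*b)) * Real.exp (c*b*0))/b by
        field_simp [hc0.ne', hb.ne'], ← Real.exp_add, ← Real.exp_add]
    rw [show -(c*b) + c*b = 0 by ring, Real.exp_zero, show -(c*b) + c*b*0 = -(c*b) by ring]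
    rw [div_le_div_iff₀ hb hb]
    nlinarith [Real.exp_pos (-(c*b))]
  calc c * ∫ t in (0:ℝ)..1, Real.exp (c * (t ^ (1+q) - t))
      ≤ c * ((∫ t in (0:ℝ)..1, Real.exp ((-(c*a)) * t))
        + ((∫ t in (0:ℝ)..1, (Real.exp (-(c*m)) : ℝ))
          + ∫ t in (0:ℝ)..1, Real.exp (-(c*b)) * Real.exp ((c*b) * t))) := by
        rw [← hIadd]; exact mul_le_mul_of_nonneg_left hmono hc0.le
    _ = c * (∫ t in (0:ℝ)..1, Real.exp ((-(c*a)) * t))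
        + (c * (∫ t in (0:ℝ)..1, (Real.exp (-(c*m)) : ℝ))
          + c * ∫ t in (0:ℝ)..1, Real.exp (-(c*b)) * Real.exp ((c*b) * t)) := by ring
    _ ≤ 1/a + (c * Real.exp (-(c*m)) + 1/b) := by rw [hEm]; gcongr
    _ = 1/(1 - δ^q) + c * Real.exp (-(c * (q*δ*(1-δ)))) + 1/(q*(1-δ)) := by
        rw [hadef, hbdef, hmdef]; ring

/-- The limit `M = lim_{n→∞} n ∫_0^1 exp(n(t^{N/(N-1)} - t)) dt` exists and `M ≥ 2`. -/
theorem limit_moser_integral (N : ℕ) (hN : 2 ≤ N) :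
    ∃ M : ℝ, 2 ≤ M ∧
      Tendsto (fun n : ℕ =>
          (n : ℝ) * ∫ t in (0:ℝ)..1, Real.exp ((n : ℝ) * (t ^ ((N : ℝ) / ((N : ℝ) - 1)) - t)))
        atTop (𝓝 M) := by
  have hN2 : (2:ℝ) ≤ (N:ℝ) := by exact_mod_cast hN
  have hden : (0:ℝ) < (N:ℝ) - 1 := by linarith
  set q : ℝ := 1/((N:ℝ)-1) with hqdef
  have hq : 0 < q := by rw [hqdef]; positivity
  have hq1 : q ≤ 1 := by rw [hqdef, div_le_one hden]; linarith
  have hqinv : 1/q = (N:ℝ) - 1 := by rw [hqdef, one_div_one_div]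
  have hpq : (N:ℝ)/((N:ℝ)-1) = 1 + q := by
    rw [hqdef]; field_simp
    ring
  simp only [hpq]
  refine ⟨1 + 1/q, by rw [hqinv]; linarith, ?_⟩
  rw [tendsto_order]
  constructor
  · -- lower bound
    intro x hx
    have hE1 : Tendsto (fun n : ℕ => Real.exp (-(n:ℝ)/2)) atTop (𝓝 0) := by
      apply Real.tendsto_exp_atBot.comp
      have h := tendsto_natCast_atTop_atTop (R := ℝ).atTop_mul_const_of_neg
        (by norm_num : (-(1:ℝ)/2) < 0)
      exact h.congr (fun n => by ring)
    have hE2 : Tendsto (fun n : ℕ => Real.exp (-((n:ℝ)*q)/2)) atTop (𝓝 0) := by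
      apply Real.tendsto_exp_atBot.comp
      have h := tendsto_natCast_atTop_atTop (R := ℝ).atTop_mul_const_of_neg
        (by nlinarith : (-(q/2)) < 0)
      exact h.congr (fun n => by ring)
    have hLoT : Tendsto (fun n : ℕ =>
        (1 - Real.exp (-(n:ℝ)/2)) + (1 - Real.exp (-((n:ℝ)*q)/2))/q) atTop (𝓝 (1 + 1/q)) := by
      have := ((tendsto_const_nhds (x := (1:ℝ))).sub hE1).add
        (((tendsto_const_nhds (x := (1:ℝ))).sub hE2).div_const q)
      have e : (1:ℝ) - 0 + (1 - 0)/q = 1 + 1/q := by norm_num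
      rwa [e] at this
    filter_upwards [(tendsto_order.1 hLoT).1 x hx, eventually_ge_atTop 1] with n h1 h2
    exact h1.trans_le (moser_lower hq (by exact_mod_cast h2))
  · -- upper bound
    intro x hx
    -- envelope tendsto
    have hδq : Tendsto (fun δ : ℝ => δ^q) (𝓝[>] (0:ℝ)) (𝓝 0) := by
      have c := (Real.continuousAt_rpow_const 0 q (Or.inr hq.le)).tendsto
      rw [Real.zero_rpow hq.ne'] at c
      exact c.mono_left nhdsWithin_le_nhds
    have hδid : Tendsto (fun δ : ℝ => δ) (𝓝[>] (0:ℝ)) (𝓝 0) :=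
      Filter.tendsto_id.mono_left nhdsWithin_le_nhds
    have henv : Tendsto (fun δ : ℝ => 1/(1-δ^q) + 1/(q*(1-δ))) (𝓝[>] (0:ℝ))
        (𝓝 (1 + 1/q)) := by
      have T1 := Filter.Tendsto.div (tendsto_const_nhds (x := (1:ℝ)))
        (tendsto_const_nhds.sub hδq) (by norm_num : (1:ℝ) - 0 ≠ 0)
      have T2 := Filter.Tendsto.div (tendsto_const_nhds (x := (1:ℝ)))
        (tendsto_const_nhds.mul (tendsto_const_nhds.sub hδid))
        (by simpa using hq.ne' : q * ((1:ℝ) - 0) ≠ 0)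
      have := T1.add T2
      have e : (1:ℝ)/(1-0) + 1/(q*(1-0)) = 1 + 1/q := by norm_num
      rwa [e] at this
    have hIoo : ∀ᶠ δ in 𝓝[>] (0:ℝ), δ ∈ Set.Ioo (0:ℝ) 1 :=
      Ioo_mem_nhdsGT (by norm_num)
    obtain ⟨δ, hδlt, hδ0, hδ1⟩ :=
      ((henv.eventually_lt_const (by linarith : 1 + 1/q < (1 + 1/q + x)/2)).and hIoo).exists
    have hm : 0 < q*δ*(1-δ) := mul_pos (mul_pos hq hδ0) (by linarith)
    have hnm : Tendsto (fun n : ℕ => (n:ℝ) * Real.exp (-((n:ℝ) * (q*δ*(1-δ))))) atTop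
        (𝓝 0) := by
      have base := Real.tendsto_pow_mul_exp_neg_atTop_nhds_zero 1
      have g : Tendsto (fun n : ℕ => (n:ℝ) * (q*δ*(1-δ))) atTop atTop :=
        tendsto_natCast_atTop_atTop.atTop_mul_const hm
      have comp := (base.comp g).const_mul (1/(q*δ*(1-δ)))
      rw [mul_zero] at comp
      apply comp.congr
      intro n
      simp only [Function.comp_apply, pow_one]
      field_simp
    filter_upwards [hnm.eventually_lt_const
        (by linarith : (0:ℝ) < x - (1 + 1/q + x)/2), eventually_ge_atTop 1] with n h1 h2
    have hub := moser_upper_bound hq hq1 hδ0 hδ1 (by exact_mod_cast h2 : (1:ℝ) ≤ (n:ℝ))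
      (δ := δ)
    have harg : -((n:ℝ) * (q*δ*(1-δ))) = -((n:ℝ) * (q*δ*(1-δ))) := rfl
    calc (n:ℝ) * ∫ t in (0:ℝ)..1, Real.exp ((n:ℝ) * (t ^ (1+q) - t))
        ≤ 1/(1-δ^q) + (n:ℝ) * Real.exp (-((n:ℝ) * (q*δ*(1-δ)))) + 1/(q*(1-δ)) := hub
      _ < x := by linarith
end

section
/- Let N ≥ 2 be an integer, let Ω ⊂ ℝ^N be a bounded open set with closure Ω̄, and let f : Ω̄ × ℝ → ℝ be continuous with f(x,s) ≥ 0 for s ≥ 0 and f(x,s) = 0 for s ≤ 0; set F(x,u) = ∫_0^u f(x,t) dt. Let λ_1 > 0 be a constant. Assume: (SCE) for every α > 0, f(x,u)·exp(−α u^{N/(N-1)}) → 0 as u → +∞, uniformly in x ∈ Ω̄; and (L4) there exist μ < λ_1 and δ > 0 such that N F(x,u) ≤ μ u^N for all x ∈ Ω̄ and 0 < u ≤ δ. Then there exist constants κ > 0, τ > 0, C > 0 and q > N such that F(x,s) ≤ (1/N)(λ_1 − τ)|s|^N + C·exp(κ|s|^{N/(N-1)})·|s|^q for all x ∈ Ω̄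 and s ∈ ℝ. -/
open Filter Topology

/-- Under (SCE) and (L4) there are `κ, τ, C > 0` and `q > N` with
`F(x,s) ≤ (1/N)(λ₁ - τ)|s|^N + C exp(κ|s|^{N/(N-1)})|s|^q` for all `x ∈ Ω̄`, `s ∈ ℝ`. -/
theorem SCE_L4_growth_estimate (N : ℕ) (hN : 2 ≤ N)
    (Ω : Set (EuclideanSpace ℝ (Fin N))) (hΩo : IsOpen Ω) (hΩb : Bornology.IsBounded Ω)
    (f : EuclideanSpace ℝ (Fin N) → ℝ → ℝ)
    (hfc : ContinuousOn (fun q : (EuclideanSpace ℝ (Fin N)) × ℝ => f q.1 q.2)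
      ((closure Ω) ×ˢ (Set.univ : Set ℝ)))
    (hfnonneg : ∀ x ∈ closure Ω, ∀ s : ℝ, 0 ≤ s → 0 ≤ f x s)
    (hfzero : ∀ x ∈ closure Ω, ∀ s : ℝ, s ≤ 0 → f x s = 0)
    (F : EuclideanSpace ℝ (Fin N) → ℝ → ℝ)
    (hF : ∀ x : EuclideanSpace ℝ (Fin N), ∀ u : ℝ, F x u = ∫ t in (0:ℝ)..u, f x t)
    (lam₁ : ℝ) (hlam₁ : 0 < lam₁)
    -- (SCE): subcritical exponential growth, uniformly in x
    (hSCE : ∀ α > (0 : ℝ), ∀ ε > (0 : ℝ), ∃ T > (0 : ℝ), ∀ x ∈ closure Ω, ∀ u : ℝ, T ≤ u →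
      f x u * Real.exp (-α * u ^ ((N : ℝ) / ((N : ℝ) - 1))) ≤ ε)
    -- (L4)
    (hL4 : ∃ μ < lam₁, ∃ δ > (0 : ℝ), ∀ x ∈ closure Ω, ∀ u : ℝ, 0 < u → u ≤ δ →
      (N : ℝ) * F x u ≤ μ * u ^ N) :
    ∃ κ > (0 : ℝ), ∃ τ > (0 : ℝ), ∃ C > (0 : ℝ), ∃ q : ℝ, (N : ℝ) < q ∧
      ∀ x ∈ closure Ω, ∀ s : ℝ,
        F x s ≤ (1 / (N : ℝ)) * (lam₁ - τ) * |s| ^ N +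
          C * Real.exp (κ * |s| ^ ((N : ℝ) / ((N : ℝ) - 1))) * |s| ^ q := by
  obtain ⟨μ, hμ, δ, hδ, hL⟩ := hL4
  have hN2 : (2:ℝ) ≤ (N:ℝ) := by exact_mod_cast hN
  set γ : ℝ := (N:ℝ) / ((N:ℝ) - 1) with hγdef
  have hγpos : 0 < γ := div_pos (by linarith) (by linarith)
  obtain ⟨T, hT, hbig⟩ := hSCE 1 one_pos 1 one_pos
  -- continuity in t for fixed x
  have hcont : ∀ x ∈ closure Ω, Continuous fun t => f x t := by
    intro x hx
    rw [← continuousOn_univ]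
    exact hfc.comp (Continuous.prodMk_right x).continuousOn (fun t _ => ⟨hx, trivial⟩)
  -- bound on compact set
  have hcomp : IsCompact ((closure Ω) ×ˢ Set.Icc (0:ℝ) T) :=
    hΩb.isCompact_closure.prod isCompact_Icc
  obtain ⟨M₀, hM₀⟩ := hcomp.exists_bound_of_continuousOn
    (hfc.mono (fun p hp => ⟨hp.1, trivial⟩))
  set M : ℝ := max M₀ 0 with hMdef
  have hM : 0 ≤ M := le_max_right _ _
  -- pointwise bound
  have hfM : ∀ x ∈ closure Ω, ∀ s : ℝ, 0 < s → ∀ t ∈ Set.Icc (0:ℝ) s,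
      f x t ≤ M + Real.exp (s ^ γ) := by
    intro x hx s hs t ht
    have hexp1 : (1:ℝ) ≤ Real.exp (s ^ γ) :=
      Real.one_le_exp (Real.rpow_nonneg hs.le γ)
    by_cases htT : t ≤ T
    · have h0 := hM₀ (x, t) ⟨hx, ht.1, htT⟩
      have h1 : f x t ≤ M₀ := le_trans (le_abs_self _) h0
      have hM₀M : M₀ ≤ M := le_max_left _ _
      linarith
    · push_neg at htT
      have h1 := hbig x hx t htT.le
      rw [neg_one_mul, Real.exp_neg] at h1
      have h2 := mul_le_mul_of_nonneg_right h1 (Real.exp_pos (t ^ γ)).le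
      rw [mul_assoc, inv_mul_cancel₀ (Real.exp_pos _).ne', mul_one, one_mul] at h2
      have h3 : Real.exp (t ^ γ) ≤ Real.exp (s ^ γ) :=
        Real.exp_le_exp.mpr (Real.rpow_le_rpow ht.1 ht.2 hγpos.le)
      linarith
  -- integral bound for positive s
  have hFb : ∀ x ∈ closure Ω, ∀ s : ℝ, 0 < s →
      F x s ≤ (M + Real.exp (s ^ γ)) * s := by
    intro x hx s hs
    rw [hF]
    calc ∫ t in (0:ℝ)..s, f x t
        ≤ ∫ _t in (0:ℝ)..s, (M + Real.exp (s ^ γ)) := by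
          apply intervalIntegral.integral_mono_on hs.le
            ((hcont x hx).intervalIntegrable 0 s) intervalIntegrable_const
          exact hfM x hx s hs
      _ = (M + Real.exp (s ^ γ)) * s := by
          simp
          ring
  refine ⟨1, one_pos, min (lam₁ / 2) ((lam₁ - μ) / 2), ?_, (M + 1) / δ ^ N, ?_, (N:ℝ) + 1,
    by linarith, ?_⟩
  · exact lt_min (by linarith) (by linarith)
  · exact div_pos (by linarith) (pow_pos hδ N)
  intro x hx s
  set τ : ℝ := min (lam₁ / 2) ((lam₁ - μ) / 2) with hτdef
  have hτ1 : τ ≤ lam₁ / 2 := min_le_left _ _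
  have hτ2 : τ ≤ (lam₁ - μ) / 2 := min_le_right _ _
  have hlτ : 0 < lam₁ - τ := by linarith
  have hμτ : μ ≤ lam₁ - τ := by linarith
  have hsecond : 0 ≤ (M + 1) / δ ^ N * Real.exp (1 * |s| ^ γ) * |s| ^ ((N:ℝ) + 1) := by
    have h : (0:ℝ) ≤ (M + 1) / δ ^ N := le_of_lt (div_pos (by linarith) (pow_pos hδ N))
    positivity
  rcases le_or_gt s 0 with hs | hs
  · -- s ≤ 0 : F = 0
    have hF0 : F x s = 0 := by
      rw [hF]
      have hEq : Set.EqOn (f x) 0 (Set.uIcc (0:ℝ) s) := by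
        intro t ht
        rw [Set.uIcc_of_ge hs] at ht
        exact hfzero x hx t ht.2
      rw [intervalIntegral.integral_congr hEq]
      simp
    rw [hF0]
    have h1 : 0 ≤ (1 / (N:ℝ)) * (lam₁ - τ) * |s| ^ N := by positivity
    linarith
  · have habs : |s| = s := abs_of_pos hs
    rcases le_or_gt s δ with hsδ | hsδ
    · -- small s
      have h1 := hL x hx s hs hsδ
      have hsN : (0:ℝ) ≤ s ^ N := pow_nonneg hs.le N
      have hNpos : (0:ℝ) < N := by linarith
      have h2 : (N:ℝ) * F x s ≤ (lam₁ - τ) * s ^ N :=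
        le_trans h1 (mul_le_mul_of_nonneg_right hμτ hsN)
      have h3 : F x s ≤ (1 / (N:ℝ)) * (lam₁ - τ) * s ^ N := by
        rw [one_div, inv_mul_eq_div, div_mul_eq_mul_div, le_div_iff₀ hNpos, mul_comm]
        exact h2
      rw [habs]
      rw [habs] at hsecond
      linarith
    · -- large s
      have hexp1 : (1:ℝ) ≤ Real.exp (s ^ γ) :=
        Real.one_le_exp (Real.rpow_nonneg hs.le γ)
      have hδN : δ ^ N ≤ s ^ N := pow_le_pow_left₀ hδ.le hsδ.le N
      have hδNpos : (0:ℝ) < δ ^ N := pow_pos hδ N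
      have hpow : s ^ ((N:ℝ) + 1) = s ^ N * s := by
        rw [Real.rpow_add hs, Real.rpow_one, Real.rpow_natCast]
      have key : (M + Real.exp (s ^ γ)) * s ≤
          (M + 1) / δ ^ N * Real.exp (s ^ γ) * s ^ ((N:ℝ) + 1) := by
        rw [hpow, div_mul_eq_mul_div, div_mul_eq_mul_div, le_div_iff₀ hδNpos]
        have hMe : M + Real.exp (s ^ γ) ≤ (M + 1) * Real.exp (s ^ γ) := by nlinarith
        nlinarith [mul_le_mul_of_nonneg_right hMe (mul_nonneg hs.le hδNpos.le),
          mul_le_mul_of_nonneg_left hδN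
            (mul_nonneg (mul_nonneg (by linarith : (0:ℝ) ≤ M + 1)
              (by linarith : (0:ℝ) ≤ Real.exp (s ^ γ))) hs.le)]
      have hfirst : 0 ≤ (1 / (N:ℝ)) * (lam₁ - τ) * |s| ^ N := by positivity
      have hFle := hFb x hx s hs
      rw [habs, one_mul]
      rw [habs] at hfirst
      linarith
end
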